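/- Let ω, ω_X, ω_C, γ, g be real numbers with γ ≠ 0, g < 0, ω < min(ω_X, ω_C), and ϖ_X·ϖ_C > (3/2)·γ² (band 3.1). Then there exist odd functions φ_X, φ_C : ℝ → ℝ such that: φ_C is continuously differentiable on ℝ with φ_C(0) = 0 and is twice differentiable at every x ≠ 0; the pair (φ_X, φ_C) satisfies the stationary polariton envelope equations at every x ≠ 0; φ_X(x) → √(ϖ_X/g) as x → 0 from the right (so φ_X has a jump discontinuity at 0); the function x ↦ φ_X(x)² is strictly decreasing on (0, ∞); and φ_X(x)² → (ϖ_X − γ²/ϖ_C)/g as x → +∞. -/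

import Mathlib

open Filter Set intervalIntegral

set_option maxHeartbeats 2000000 in
theorem soliton_aux (a b g γ : ℝ) (hγ : γ ≠ 0) (hg : g < 0) (ha : a < 0) (hb : b < 0)
    (hband : a * b > (3/2) * γ ^ 2) :
    ∃ φX φC : ℝ → ℝ,
      (∀ x : ℝ, φX (-x) = -φX x) ∧ (∀ x : ℝ, φC (-x) = -φC x) ∧
      ContDiff ℝ 1 φC ∧ φC 0 = 0 ∧
      (∀ x : ℝ, x ≠ 0 → DifferentiableAt ℝ (deriv φC) x) ∧
      (∀ x : ℝ, x ≠ 0 →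
        (g * φX x ^ 2 - a) * φX x + γ * φC x = 0 ∧
        -(1/2) * deriv (deriv φC) x - b * φC x + γ * φX x = 0) ∧
      Tendsto φX (nhdsWithin 0 (Set.Ioi 0)) (nhds (Real.sqrt (a / g))) ∧
      StrictAntiOn (fun x => φX x ^ 2) (Set.Ioi 0) ∧
      Tendsto (fun x => φX x ^ 2) atTop (nhds ((a - γ ^ 2 / b) / g)) := by
  have hg' : g ≠ 0 := ne_of_lt hg
  have hb' : b ≠ 0 := ne_of_lt hb
  have hγ2 : 0 < γ ^ 2 := by positivity
  have hbg : 0 < b * g := mul_pos_of_neg_of_neg hb hg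
  -- the key constants
  obtain ⟨r, hr⟩ : ∃ r : ℝ, r = γ ^ 2 / (2 * (b * g)) := ⟨_, rfl⟩
  obtain ⟨t1, ht1⟩ : ∃ t : ℝ, t = (a - γ ^ 2 / b) / g := ⟨_, rfl⟩
  obtain ⟨t0, ht0⟩ : ∃ t : ℝ, t = a / g := ⟨_, rfl⟩
  have hr0 : 0 < r := by rw [hr]; positivity
  have hrt1 : r < t1 := by
    have h : t1 - r = (2 * (a * b) - 3 * γ ^ 2) / (2 * (b * g)) := by
      rw [ht1, hr]; field_simp; ring
    have : 0 < t1 - r := by rw [h]; apply div_pos (by nlinarith) (by positivity)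
    linarith
  have ht10 : t1 < t0 := by
    have h : t0 - t1 = γ ^ 2 / (b * g) := by rw [ht1, ht0]; field_simp; ring
    have : 0 < t0 - t1 := by rw [h]; positivity
    linarith
  have ht1pos : 0 < t1 := lt_trans hr0 hrt1
  obtain ⟨u1, hu1⟩ : ∃ u : ℝ, u = Real.sqrt t1 := ⟨_, rfl⟩
  obtain ⟨u0, hu0⟩ : ∃ u : ℝ, u = Real.sqrt t0 := ⟨_, rfl⟩
  have hu1pos : 0 < u1 := by rw [hu1]; exact Real.sqrt_pos.2 ht1pos
  have hu1sq : u1 ^ 2 = t1 := by rw [hu1]; exact Real.sq_sqrt ht1pos.le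
  have hu0sq : u0 ^ 2 = t0 := by rw [hu0]; exact Real.sq_sqrt (by linarith)
  have hu10 : u1 < u0 := by rw [hu1, hu0]; exact Real.sqrt_lt_sqrt ht1pos.le ht10
  obtain ⟨κ, hκ⟩ : ∃ k : ℝ, k = Real.sqrt (-(2 * b)) * (-g) := ⟨_, rfl⟩
  have hκpos : 0 < κ := by
    rw [hκ]; exact mul_pos (Real.sqrt_pos.2 (by linarith)) (by linarith)
  have hκsq : κ ^ 2 = -(2 * b) * g ^ 2 := by
    rw [hκ, mul_pow, Real.sq_sqrt (by linarith)]; ring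
  -- the speed function W
  obtain ⟨W, hW⟩ : ∃ W : ℝ → ℝ,
      W = fun u => κ * (u ^ 2 - t1) * Real.sqrt (u ^ 2 - r) / (a - 3 * g * u ^ 2) := ⟨_, rfl⟩
  have hsqgt : ∀ u : ℝ, u1 < u → t1 < u ^ 2 := by
    intro u hu; nlinarith
  have hm : 0 < a - 3 * g * t1 := by
    have h : a - 3 * g * t1 = (3 * γ ^ 2 - 2 * (a * b)) / b := by rw [ht1]; field_simp; ring
    rw [h]; apply div_pos_of_neg_of_neg (by nlinarith) hb
  have hden : ∀ u : ℝ, t1 ≤ u ^ 2 → 0 < a - 3 * g * u ^ 2 := by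
    intro u hu; nlinarith
  have hWpos : ∀ u : ℝ, u1 < u → 0 < W u := by
    intro u hu
    have h1 := hsqgt u hu
    rw [hW]
    exact div_pos (mul_pos (mul_pos hκpos (by linarith))
      (Real.sqrt_pos.2 (by linarith))) (hden u h1.le)
  have hWcont : ∀ u : ℝ, u1 < u → ContinuousAt W u := by
    intro u hu
    rw [hW]
    have h1 : ContinuousAt (fun u : ℝ => κ * (u ^ 2 - t1) * Real.sqrt (u ^ 2 - r)) u := by
      fun_prop
    exact h1.div (by fun_prop) (ne_of_gt (hden u (hsqgt u hu).le))
  have hWIcont : ∀ u : ℝ, u1 < u → ContinuousAt (fun s => (W s)⁻¹) u := by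
    intro u hu
    exact (hWcont u hu).inv₀ (ne_of_gt (hWpos u hu))
  -- the inverse profile X
  obtain ⟨X, hX⟩ : ∃ X : ℝ → ℝ, X = fun u => ∫ s in u..u0, (W s)⁻¹ := ⟨_, rfl⟩
  have hX0 : X u0 = 0 := by rw [hX]; exact intervalIntegral.integral_same
  have hint : ∀ u : ℝ, u1 < u → IntervalIntegrable (fun s => (W s)⁻¹) MeasureTheory.volume u u0 := by
    intro u hu
    apply ContinuousOn.intervalIntegrable
    intro s hs
    have : u1 < s := lt_of_lt_of_le (lt_min hu hu10) (hs.1 : min u u0 ≤ s)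
    exact (hWIcont s this).continuousWithinAt
  have hXderiv : ∀ u : ℝ, u1 < u → HasDerivAt X (-(W u)⁻¹) u := by
    intro u hu
    have h1 : HasDerivAt (fun v => ∫ s in u0..v, (W s)⁻¹) ((W u)⁻¹) u := by
      apply intervalIntegral.integral_hasDerivAt_right ((hint u hu).symm)
      · exact ContinuousAt.stronglyMeasurableAtFilter isOpen_Ioi
          (fun s hs => hWIcont s hs) u hu
      · exact hWIcont u hu
    have h2 : X = fun v => -∫ s in u0..v, (W s)⁻¹ := by
      funext v; rw [hX]; exact intervalIntegral.integral_symm u0 v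
    rw [h2]
    exact h1.neg
  have hXanti : StrictAntiOn X (Set.Ioi u1) := by
    apply strictAntiOn_of_deriv_neg (convex_Ioi u1)
    · intro u hu
      exact ((hXderiv u hu).continuousAt).continuousWithinAt
    · intro u hu
      rw [interior_Ioi] at hu
      rw [(hXderiv u hu).deriv]
      simp only [neg_neg, Left.neg_neg_iff]
      exact inv_pos.2 (hWpos u hu)
  obtain ⟨C, hC⟩ : ∃ C : ℝ, C = κ * (2 * u0) * Real.sqrt (t0 - r) / (a - 3 * g * t1) := ⟨_, rfl⟩
  have hCpos : 0 < C := by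
    rw [hC]
    exact div_pos (mul_pos (mul_pos hκpos (by linarith)) (Real.sqrt_pos.2 (by linarith))) hm
  have hWle : ∀ s : ℝ, s ∈ Set.Ioc u1 u0 → W s ≤ C * (s - u1) := by
    intro s hs
    have h1 : t1 < s ^ 2 := hsqgt s hs.1
    have hspos : 0 < s := hu1pos.trans hs.1
    have h2 : s ^ 2 ≤ t0 := by rw [← hu0sq]; exact pow_le_pow_left₀ hspos.le hs.2 2
    have h5 : 0 < s - u1 := by linarith [hs.1]
    have hs1 : Real.sqrt (s ^ 2 - r) ≤ Real.sqrt (t0 - r) := Real.sqrt_le_sqrt (by linarith)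
    have hs0 : 0 ≤ Real.sqrt (s ^ 2 - r) := Real.sqrt_nonneg _
    have hd1 : a - 3 * g * t1 ≤ a - 3 * g * s ^ 2 := by nlinarith
    have hsu : s + u1 ≤ 2 * u0 := by nlinarith [hs.2, hu10]
    have hfact : s ^ 2 - t1 = (s - u1) * (s + u1) := by rw [← hu1sq]; ring
    simp only [hW, hC]
    rw [hfact, div_mul_eq_mul_div, div_le_div_iff₀ (hden s h1.le) hm]
    have hb0 : 0 ≤ κ * ((s - u1) * (s + u1)) :=
      mul_nonneg hκpos.le (mul_nonneg h5.le (by linarith))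
    have b1 : κ * ((s - u1) * (s + u1)) ≤ κ * ((s - u1) * (2 * u0)) :=
      mul_le_mul_of_nonneg_left (mul_le_mul_of_nonneg_left hsu h5.le) hκpos.le
    have e1 : κ * ((s - u1) * (s + u1)) * Real.sqrt (s ^ 2 - r) ≤
        κ * ((s - u1) * (2 * u0)) * Real.sqrt (t0 - r) :=
      mul_le_mul b1 hs1 hs0 (le_trans hb0 b1)
    have b3 : 0 ≤ κ * (2 * u0) * Real.sqrt (t0 - r) * (s - u1) :=
      mul_nonneg (mul_nonneg (mul_nonneg hκpos.le (by linarith)) (Real.sqrt_nonneg _)) h5.le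
    calc κ * ((s - u1) * (s + u1)) * Real.sqrt (s ^ 2 - r) * (a - 3 * g * t1)
        ≤ κ * ((s - u1) * (2 * u0)) * Real.sqrt (t0 - r) * (a - 3 * g * t1) :=
          mul_le_mul_of_nonneg_right e1 hm.le
      _ = κ * (2 * u0) * Real.sqrt (t0 - r) * (s - u1) * (a - 3 * g * t1) := by ring
      _ ≤ κ * (2 * u0) * Real.sqrt (t0 - r) * (s - u1) * (a - 3 * g * s ^ 2) :=
          mul_le_mul_of_nonneg_left hd1 b3
  have hXlb : ∀ u : ℝ, u ∈ Set.Ioc u1 u0 →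
      C⁻¹ * Real.log ((u0 - u1) / (u - u1)) ≤ X u := by
    intro u hu
    have h5 : 0 < u - u1 := by linarith [hu.1]
    have hlog : (∫ s in u..u0, (C * (s - u1))⁻¹) = C⁻¹ * Real.log ((u0 - u1) / (u - u1)) := by
      have h6 : ∀ s : ℝ, (C * (s - u1))⁻¹ = C⁻¹ * (s - u1)⁻¹ := fun s => by rw [mul_inv]
      simp only [h6]
      rw [intervalIntegral.integral_const_mul]
      congr 1
      have h7 : (∫ s in u..u0, (s - u1)⁻¹) = ∫ s in u - u1..u0 - u1, s⁻¹ :=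
        intervalIntegral.integral_comp_sub_right (fun s => s⁻¹) u1
      rw [h7, integral_inv]
      intro h8
      rw [Set.mem_uIcc] at h8
      rcases h8 with ⟨h9, _⟩ | ⟨h9, _⟩ <;> linarith [hu10]
    rw [hX, ← hlog]
    have hcont2 : ContinuousOn (fun s : ℝ => (C * (s - u1))⁻¹) (Set.uIcc u u0) := by
      intro s hs
      rw [Set.uIcc_of_le (by linarith [hu.2])] at hs
      have h9 : u1 < s := by linarith [hs.1]
      have hne : C * (s - u1) ≠ 0 := by
        have : 0 < C * (s - u1) := mul_pos hCpos (by linarith)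
        linarith
      exact ((continuousAt_const.mul (continuousAt_id.sub continuousAt_const)).inv₀
        hne).continuousWithinAt
    apply intervalIntegral.integral_mono_on (by linarith [hu.2])
      (hcont2.intervalIntegrable) (hint u hu.1)
    intro s hs
    have h9 : s ∈ Set.Ioc u1 u0 := ⟨by linarith [hs.1], hs.2⟩
    exact inv_anti₀ (hWpos s h9.1) (hWle s h9)
  have hXtop : Tendsto X (nhdsWithin u1 (Set.Ioi u1)) atTop := by
    have h1 : Tendsto (fun u : ℝ => u - u1) (nhdsWithin u1 (Set.Ioi u1))
        (nhdsWithin 0 (Set.Ioi 0)) := by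
      apply tendsto_nhdsWithin_of_tendsto_nhds_of_eventually_within
      · have : Tendsto (fun u : ℝ => u - u1) (nhds u1) (nhds (u1 - u1)) :=
          (continuous_id.sub continuous_const).tendsto u1
        simpa using this.mono_left nhdsWithin_le_nhds
      · filter_upwards [self_mem_nhdsWithin] with u hu
        simpa using (Set.mem_Ioi.1 hu)
    have h2 : Tendsto (fun u : ℝ => Real.log (u - u1)) (nhdsWithin u1 (Set.Ioi u1)) atBot :=
      Real.tendsto_log_nhdsGT_zero.comp h1
    have h3 : Tendsto (fun u : ℝ => C⁻¹ * (Real.log (u0 - u1) - Real.log (u - u1)))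
        (nhdsWithin u1 (Set.Ioi u1)) atTop := by
      apply Tendsto.const_mul_atTop (inv_pos.2 hCpos)
      exact tendsto_atTop_add_const_left _ _ (tendsto_neg_atTop_iff.2 h2)
    apply tendsto_atTop_mono' _ _ h3
    filter_upwards [Ioo_mem_nhdsGT_of_mem (Set.left_mem_Ico.2 hu10), self_mem_nhdsWithin]
      with u hu _
    have hu' : u ∈ Set.Ioc u1 u0 := ⟨hu.1, hu.2.le⟩
    have h5 : 0 < u - u1 := by linarith [hu.1]
    have hlogd : Real.log ((u0 - u1) / (u - u1)) = Real.log (u0 - u1) - Real.log (u - u1) :=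
      Real.log_div (by linarith [hu10]) (by linarith)
    calc C⁻¹ * (Real.log (u0 - u1) - Real.log (u - u1))
        = C⁻¹ * Real.log ((u0 - u1) / (u - u1)) := by rw [hlogd]
      _ ≤ X u := hXlb u hu'
  have hsurj : ∀ x : ℝ, 0 ≤ x → ∃ u ∈ Set.Ioc u1 u0, X u = x := by
    intro x hx
    have hev : ∀ᶠ u in nhdsWithin u1 (Set.Ioi u1), x < X u :=
      hXtop.eventually (eventually_gt_atTop x)
    have hmem : Set.Ioo u1 u0 ∈ nhdsWithin u1 (Set.Ioi u1) :=
      Ioo_mem_nhdsGT_of_mem (Set.left_mem_Ico.2 hu10)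
    obtain ⟨u', hu'1, hu'2⟩ :=
      (hev.and (Filter.eventually_of_mem hmem fun y hy => hy)).exists
    have hcont : ContinuousOn X (Set.Icc u' u0) := by
      intro v hv
      exact ((hXderiv v (lt_of_lt_of_le hu'2.1 hv.1)).continuousAt).continuousWithinAt
    have hsub := intermediate_value_Icc' hu'2.2.le hcont
    obtain ⟨u, hu, hXu⟩ := hsub ⟨by rw [hX0]; exact hx, hu'1.le⟩
    exact ⟨u, ⟨lt_of_lt_of_le hu'2.1 hu.1, hu.2⟩, hXu⟩
  -- the wave profile φ on [0, ∞)
  obtain ⟨φ, hφ⟩ : ∃ φ : ℝ → ℝ, φ = Function.invFunOn X (Set.Ioc u1 u0) := ⟨_, rfl⟩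
  have hφmem : ∀ x : ℝ, 0 ≤ x → φ x ∈ Set.Ioc u1 u0 := by
    intro x hx; rw [hφ]; exact Function.invFunOn_mem (hsurj x hx)
  have hφXeq : ∀ x : ℝ, 0 ≤ x → X (φ x) = x := by
    intro x hx; rw [hφ]; exact Function.invFunOn_eq (hsurj x hx)
  have hφ0 : φ 0 = u0 := by
    have h1 := hφmem 0 le_rfl
    have h2 := hφXeq 0 le_rfl
    have := hXanti.injOn (Set.mem_of_mem_of_subset h1 (fun y hy => hy.1)) (Set.mem_Ioi.2 hu10)
    exact this (by rw [h2, hX0])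
  have hkey : ∀ c ∈ Set.Ioc u1 u0, ∀ x : ℝ, 0 ≤ x → (c < φ x ↔ x < X c) := by
    intro c hc x hx
    constructor
    · intro h
      have h2 := hXanti (Set.mem_Ioi.2 hc.1) (Set.mem_Ioi.2 (lt_trans hc.1 h)) h
      rwa [hφXeq x hx] at h2
    · intro h
      by_contra hcon
      push_neg at hcon
      rcases eq_or_lt_of_le hcon with he | hl
      · rw [← he, hφXeq x hx] at h; exact lt_irrefl x h
      · have h2 := hXanti (Set.mem_Ioi.2 (hφmem x hx).1) (Set.mem_Ioi.2 hc.1) hl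
        rw [hφXeq x hx] at h2
        linarith
  have hkey2 : ∀ c ∈ Set.Ioc u1 u0, ∀ x : ℝ, 0 ≤ x → (φ x < c ↔ X c < x) := by
    intro c hc x hx
    constructor
    · intro h
      have h2 := hXanti (Set.mem_Ioi.2 (hφmem x hx).1) (Set.mem_Ioi.2 hc.1) h
      rwa [hφXeq x hx] at h2
    · intro h
      by_contra hcon
      push_neg at hcon
      rcases eq_or_lt_of_le hcon with he | hl
      · rw [he, hφXeq x hx] at h; exact lt_irrefl x h
      · have h2 := hXanti (Set.mem_Ioi.2 hc.1) (Set.mem_Ioi.2 (hφmem x hx).1) hl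
        rw [hφXeq x hx] at h2
        linarith
  have hφanti : ∀ x y : ℝ, 0 ≤ x → 0 ≤ y → x < y → φ y < φ x := by
    intro x y hx hy hxy
    have h1 := hφXeq x hx
    have h2 := hφXeq y hy
    by_contra hcon
    push_neg at hcon
    rcases eq_or_lt_of_le hcon with he | hl
    · rw [he, h2] at h1; linarith
    · have h3 := hXanti (Set.mem_Ioi.2 (hφmem x hx).1) (Set.mem_Ioi.2 (hφmem y hy).1) hl
      rw [h1, h2] at h3; linarith
  have hφcont : ∀ x : ℝ, 0 < x → ContinuousAt φ x := by
    intro x hx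
    rw [ContinuousAt]
    apply tendsto_order.2
    constructor
    · intro c hc
      rcases le_or_gt c u1 with hcu | hcu
      · filter_upwards [Ioi_mem_nhds hx] with y hy
        exact lt_of_le_of_lt hcu (hφmem y hy.le).1
      · have hcIoc : c ∈ Set.Ioc u1 u0 := ⟨hcu, le_trans hc.le (hφmem x hx.le).2⟩
        have hXc : x < X c := (hkey c hcIoc x hx.le).1 hc
        filter_upwards [Ioo_mem_nhds hx hXc] with y hy
        exact (hkey c hcIoc y hy.1.le).2 hy.2
    · intro c hc
      rcases le_or_gt c u0 with hcu | hcu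
      · have hcIoc : c ∈ Set.Ioc u1 u0 := ⟨lt_trans (hφmem x hx.le).1 hc, hcu⟩
        have hXc : X c < x := (hkey2 c hcIoc x hx.le).1 hc
        have hXc0 : 0 ≤ X c := by
          rcases eq_or_lt_of_le hcu with he | hl
          · rw [he, hX0]
          · rw [← hX0]
            exact (hXanti (Set.mem_Ioi.2 hcIoc.1) (Set.mem_Ioi.2 hu10) hl).le
        filter_upwards [Ioi_mem_nhds hXc] with y hy
        exact (hkey2 c hcIoc y (le_trans hXc0 hy.le)).2 hy
      · filter_upwards [Ioi_mem_nhds hx] with y hy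
        exact lt_of_le_of_lt (hφmem y hy.le).2 hcu
  have hφcont0 : Tendsto φ (nhdsWithin 0 (Set.Ici 0)) (nhds u0) := by
    apply tendsto_order.2
    constructor
    · intro c hc
      rcases le_or_gt c u1 with hcu | hcu
      · filter_upwards [self_mem_nhdsWithin] with y hy
        exact lt_of_le_of_lt hcu (hφmem y hy).1
      · have hcIoc : c ∈ Set.Ioc u1 u0 := ⟨hcu, hc.le⟩
        have hXc : 0 < X c := by
          rw [← hX0]
          exact hXanti (Set.mem_Ioi.2 hcIoc.1) (Set.mem_Ioi.2 hu10) hc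
        filter_upwards [self_mem_nhdsWithin,
          mem_nhdsWithin_of_mem_nhds (Iio_mem_nhds hXc)] with y hy1 hy2
        exact (hkey c hcIoc y hy1).2 hy2
    · intro c hc
      filter_upwards [self_mem_nhdsWithin] with y hy
      exact lt_of_le_of_lt (hφmem y hy).2 hc
  have hφderiv : ∀ x : ℝ, 0 < x → HasDerivAt φ (-W (φ x)) x := by
    intro x hx
    have humem := hφmem x hx.le
    have h1 : HasDerivAt X (-(W (φ x))⁻¹) (φ x) := hXderiv _ humem.1
    have h2 : ∀ᶠ y in nhds x, X (φ y) = y := by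
      filter_upwards [Ioi_mem_nhds hx] with y hy
      exact hφXeq y hy.le
    have h3 : -(W (φ x))⁻¹ ≠ 0 := by
      have h4 := hWpos _ humem.1
      simp [ne_of_gt h4]
    have h4 := HasDerivAt.of_local_left_inverse (hφcont x hx) h1 h3 h2
    have h5 : (-(W (φ x))⁻¹)⁻¹ = -W (φ x) := by rw [inv_neg, inv_inv]
    rwa [h5] at h4
  -- the envelopes
  obtain ⟨φX, hφX⟩ : ∃ f : ℝ → ℝ,
      f = fun x => if 0 < x then φ x else if x < 0 then -φ (-x) else 0 := ⟨_, rfl⟩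
  obtain ⟨φC, hφC⟩ : ∃ f : ℝ → ℝ, f = fun x => (a * φX x - g * φX x ^ 3) / γ := ⟨_, rfl⟩
  obtain ⟨Φ, hΦdef⟩ : ∃ f : ℝ → ℝ, f = fun x => φ |x| := ⟨_, rfl⟩
  obtain ⟨ψ, hψ⟩ : ∃ f : ℝ → ℝ,
      f = fun x => -(κ / γ) * (Φ x ^ 2 - t1) * Real.sqrt (Φ x ^ 2 - r) := ⟨_, rfl⟩
  have hφXpos : ∀ x : ℝ, 0 < x → φX x = φ x := fun x hx => by rw [hφX]; simp [hx]
  have hφX0 : φX 0 = 0 := by rw [hφX]; simp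
  have hφXodd : ∀ x : ℝ, φX (-x) = -φX x := by
    intro x
    rcases lt_trichotomy x 0 with h | h | h
    · rw [hφX]
      simp only [if_pos (neg_pos.2 h), if_neg (not_lt.2 h.le), if_pos h, neg_neg]
    · rw [h, neg_zero, hφX]; simp
    · rw [hφX]
      simp only [if_neg (by linarith : ¬ 0 < -x), if_pos (by linarith : -x < 0),
        if_pos h, neg_neg]
  have hφCodd : ∀ x : ℝ, φC (-x) = -φC x := by
    intro x; rw [hφC]; simp only [hφXodd]; ring
  have hφC0 : φC 0 = 0 := by rw [hφC]; simp [hφX0]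
  have hΦval : ∀ x : ℝ, 0 < x → Φ x = φ x := fun x hx => by
    rw [hΦdef]; simp [abs_of_pos hx]
  have hΦneg : ∀ x : ℝ, x < 0 → Φ x = φ (-x) := fun x hx => by
    rw [hΦdef]; simp [abs_of_neg hx]
  have hΦmem : ∀ x : ℝ, Φ x ∈ Set.Ioc u1 u0 := fun x => by
    rw [hΦdef]; exact hφmem _ (abs_nonneg x)
  have hΦ0 : Φ 0 = u0 := by rw [hΦdef]; simpa using hφ0
  have hΦeven : ∀ x : ℝ, Φ (-x) = Φ x := fun x => by rw [hΦdef]; simp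
  have hψeven : ∀ x : ℝ, ψ (-x) = ψ x := fun x => by rw [hψ]; simp only [hΦeven]
  have hΦcont : Continuous Φ := by
    rw [continuous_iff_continuousAt]
    intro x
    rcases eq_or_ne x 0 with rfl | hx
    · have h1 : Tendsto (fun y : ℝ => |y|) (nhds 0) (nhdsWithin 0 (Set.Ici 0)) := by
        apply tendsto_nhdsWithin_of_tendsto_nhds_of_eventually_within
        · have h0 := continuous_abs.tendsto (0:ℝ)
          rwa [abs_zero] at h0
        · exact Filter.Eventually.of_forall fun y => abs_nonneg y
      have h2 := hφcont0.comp h1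
      rw [ContinuousAt, hΦ0, hΦdef]
      exact h2
    · have h1 : ContinuousAt φ |x| := hφcont _ (abs_pos.2 hx)
      have h2 := h1.comp continuous_abs.continuousAt
      rw [hΦdef]; exact h2
  have hψcont : Continuous ψ := by
    rw [hψ]
    exact (continuous_const.mul ((hΦcont.pow 2).sub continuous_const)).mul
      (Real.continuous_sqrt.comp ((hΦcont.pow 2).sub continuous_const))
  have hcubderiv : ∀ u : ℝ,
      HasDerivAt (fun v => (a * v - g * v ^ 3) / γ) ((a - 3 * g * u ^ 2) / γ) u := by
    intro u
    have h2 := (hasDerivAt_pow 3 u).const_mul g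
    have h3 := (hasDerivAt_id u).const_mul a
    have h4 : HasDerivAt (fun v : ℝ => a * v - g * v ^ 3) (a - 3 * g * u ^ 2) u := by
      refine (h3.sub h2).congr_deriv ?_
      rw [show (3:ℕ) - 1 = 2 from rfl]
      push_cast
      ring
    exact h4.div_const γ
  have hψval : ∀ x : ℝ, 0 < x →
      ψ x = -(κ / γ) * (φ x ^ 2 - t1) * Real.sqrt (φ x ^ 2 - r) := by
    intro x hx; rw [hψ]; simp only [hΦval x hx]
  have hφCderivpos : ∀ x : ℝ, 0 < x → HasDerivAt φC (ψ x) x := by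
    intro x hx
    have hu := hφmem x hx.le
    have h1 := (hcubderiv (φ x)).comp x (hφderiv x hx)
    have h2 : φC =ᶠ[nhds x] (fun v => (a * v - g * v ^ 3) / γ) ∘ φ := by
      filter_upwards [Ioi_mem_nhds hx] with y hy
      rw [hφC]; simp only [Function.comp]; rw [hφXpos y hy]
    have h3 := h1.congr_of_eventuallyEq h2
    have h4 : (a - 3 * g * φ x ^ 2) / γ * -W (φ x) = ψ x := by
      rw [hψval x hx]; simp only [hW]
      have h5 := hden (φ x) (hsqgt _ hu.1).le
      field_simp
    rwa [h4] at h3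
  have hφCderivneg : ∀ x : ℝ, x < 0 → HasDerivAt φC (ψ x) x := by
    intro x hx
    have h1 := hφCderivpos (-x) (by linarith)
    have h3 := (h1.comp x (hasDerivAt_neg x)).neg
    have h4 : φC =ᶠ[nhds x] fun y => -(φC ∘ fun z : ℝ => -z) y := by
      apply Filter.Eventually.of_forall
      intro y
      show φC y = -(φC (-y))
      rw [hφCodd y, neg_neg]
    have h5 := h3.congr_of_eventuallyEq h4
    have h6 : -(ψ (-x) * -1) = ψ x := by rw [hψeven x]; ring
    rwa [h6] at h5
  have hcubu0 : (a * u0 - g * u0 ^ 3) / γ = 0 := by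
    have hgt0 : g * t0 = a := by rw [ht0]; field_simp
    have h1 : a * u0 - g * u0 ^ 3 = 0 := by
      have h2 : u0 ^ 3 = u0 * t0 := by rw [← hu0sq]; ring
      rw [h2]
      linear_combination (-u0) * hgt0
    rw [h1]
    simp
  have hφCcont0 : ContinuousAt φC 0 := by
    have hbound : ∀ x : ℝ, ‖φC x‖ ≤ ‖(a * Φ x - g * Φ x ^ 3) / γ‖ := by
      intro x
      rcases lt_trichotomy x 0 with h | h | h
      · have e1 : φC x = -((a * φ (-x) - g * φ (-x) ^ 3) / γ) := by
          rw [hφC, hφX]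
          simp only [if_neg (not_lt.2 h.le), if_pos h]
          ring
        rw [e1, norm_neg, hΦneg x h]
      · rw [h, hφC0]; simp; positivity
      · have e1 : φC x = (a * φ (x) - g * φ (x) ^ 3) / γ := by
          rw [hφC]
          simp only [hφXpos x h]
        rw [e1, hΦval x h]
    have htend : Tendsto (fun x => ‖(a * Φ x - g * Φ x ^ 3) / γ‖) (nhds 0) (nhds 0) := by
      have h1 : Continuous fun x => ‖(a * Φ x - g * Φ x ^ 3) / γ‖ :=
        (((continuous_const.mul hΦcont).sub
          (continuous_const.mul (hΦcont.pow 3))).div_const γ).norm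
      have h2 := h1.tendsto 0
      simpa [hΦ0, hcubu0] using h2
    rw [ContinuousAt, hφC0]
    exact squeeze_zero_norm hbound htend
  have hφCderiv : ∀ x : ℝ, HasDerivAt φC (ψ x) x := by
    intro x
    rcases lt_trichotomy x 0 with h | h | h
    · exact hφCderivneg x h
    · subst h
      exact hasDerivAt_of_hasDerivAt_of_ne
        (fun y hy => (lt_or_gt_of_ne hy).elim (hφCderivneg y) (hφCderivpos y))
        hφCcont0 hψcont.continuousAt
    · exact hφCderivpos x h
  have hderiv_eq : deriv φC = ψ := funext fun x => (hφCderiv x).deriv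
  have hcontdiff : ContDiff ℝ 1 φC :=
    contDiff_one_iff_deriv.2 ⟨fun x => (hφCderiv x).differentiableAt, hderiv_eq ▸ hψcont⟩
  -- second derivative
  obtain ⟨DF, hDF⟩ : ∃ f : ℝ → ℝ, f = fun u => -(κ / γ) *
      (2 * u * Real.sqrt (u ^ 2 - r) + (u ^ 2 - t1) * (u / Real.sqrt (u ^ 2 - r))) := ⟨_, rfl⟩
  have hFderiv : ∀ u : ℝ, u ∈ Set.Ioc u1 u0 →
      HasDerivAt (fun v => -(κ / γ) * (v ^ 2 - t1) * Real.sqrt (v ^ 2 - r)) (DF u) u := by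
    intro u hu
    have h1 : t1 < u ^ 2 := hsqgt u hu.1
    have hur : 0 < u ^ 2 - r := by linarith
    have hs0 : 0 < Real.sqrt (u ^ 2 - r) := Real.sqrt_pos.2 hur
    have h2 : HasDerivAt (fun v : ℝ => v ^ 2 - r) (2 * u) u := by
      simpa using (hasDerivAt_pow 2 u).sub_const r
    have h3 := (Real.hasDerivAt_sqrt (ne_of_gt hur)).comp u h2
    have h4 : HasDerivAt (fun v : ℝ => -(κ / γ) * (v ^ 2 - t1)) (-(κ / γ) * (2 * u)) u := by
      simpa using ((hasDerivAt_pow 2 u).sub_const t1).const_mul (-(κ / γ))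
    have h5 := h4.mul h3
    have h6 : -(κ / γ) * (2 * u) * Real.sqrt (u ^ 2 - r) +
        -(κ / γ) * (u ^ 2 - t1) * (1 / (2 * Real.sqrt (u ^ 2 - r)) * (2 * u)) = DF u := by
      rw [hDF]
      field_simp
      ring
    rw [← h6]
    exact h5
  have hψderivpos : ∀ x : ℝ, 0 < x → HasDerivAt ψ (DF (φ x) * -W (φ x)) x := by
    intro x hx
    have h1 := (hFderiv (φ x) (hφmem x hx.le)).comp x (hφderiv x hx)
    apply h1.congr_of_eventuallyEq
    filter_upwards [Ioi_mem_nhds hx] with y hy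
    rw [hψval y hy]
    rfl
  have hψderivneg : ∀ x : ℝ, x < 0 →
      HasDerivAt ψ (-(DF (φ (-x)) * -W (φ (-x)))) x := by
    intro x hx
    have h1 := hψderivpos (-x) (by linarith)
    have h3 := h1.comp x (hasDerivAt_neg x)
    have h4 : ψ =ᶠ[nhds x] ψ ∘ fun y => -y :=
      Filter.Eventually.of_forall fun y => (hψeven y).symm
    have h5 := h3.congr_of_eventuallyEq h4
    have h6 : DF (φ (-x)) * -W (φ (-x)) * -1 = -(DF (φ (-x)) * -W (φ (-x))) := by ring
    rwa [h6] at h5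
  -- the algebraic identity giving the second envelope equation
  have key : ∀ u : ℝ, u ∈ Set.Ioc u1 u0 →
      -(1/2) * (DF u * -W u) - b * ((a * u - g * u ^ 3) / γ) + γ * u = 0 := by
    intro u hu
    have h1 : t1 < u ^ 2 := hsqgt u hu.1
    have hur : 0 < u ^ 2 - r := by linarith
    have hs0 : 0 < Real.sqrt (u ^ 2 - r) := Real.sqrt_pos.2 hur
    have hs2 : Real.sqrt (u ^ 2 - r) ^ 2 = u ^ 2 - r := Real.sq_sqrt hur.le
    have hd := hden u h1.le
    have hT : b * g * t1 = a * b - γ ^ 2 := by rw [ht1]; field_simp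
    have hR : 2 * (b * g) * r = γ ^ 2 := by rw [hr]; field_simp
    rw [hDF]; simp only [hW]
    set sq := Real.sqrt (u ^ 2 - r) with hsq
    have hd' := hd.ne'
    have hs0' := hs0.ne'
    field_simp
    have hd'' : a - u ^ 2 * 3 * g ≠ 0 := by intro h; apply hd'; linarith
    have P : κ ^ 2 * (u ^ 2 - t1) * (2 * sq ^ 2 + (u ^ 2 - t1)) =
        (2 * γ ^ 2 - 2 * b * (a - u ^ 2 * g)) * (a - u ^ 2 * 3 * g) := by
      linear_combination ((u ^ 2 - t1) * (2 * sq ^ 2 + (u ^ 2 - t1))) * hκsq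
        + (-4 * b * g ^ 2 * (u ^ 2 - t1)) * hs2 + (2 * g * (u ^ 2 - t1)) * hR
        + (2 * g * (u ^ 2 - t1) - 2 * (a - u ^ 2 * 3 * g)) * hT
    rw [div_eq_of_eq_mul hd'' P]
    ring
  -- conclusion
  refine ⟨φX, φC, hφXodd, hφCodd, hcontdiff, hφC0, ?_, ?_, ?_, ?_, ?_⟩
  · intro x hx
    rw [hderiv_eq]
    rcases lt_or_gt_of_ne hx with h | h
    · exact (hψderivneg x h).differentiableAt
    · exact (hψderivpos x h).differentiableAt
  · intro x hx
    constructor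
    · rw [hφC]
      field_simp
      ring
    · rw [hderiv_eq]
      rcases lt_or_gt_of_ne hx with h | h
      · have hx' : 0 < -x := by linarith
        have hd1 : deriv ψ x = -(DF (φ (-x)) * -W (φ (-x))) := (hψderivneg x h).deriv
        have hd2 : -(1/2) * (DF (φ (-x)) * -W (φ (-x))) - b * ((a * φ (-x) -
            g * φ (-x) ^ 3) / γ) + γ * φ (-x) = 0 := key (φ (-x)) (hφmem (-x) hx'.le)
        have hφCx : φC x = -((a * φ (-x) - g * φ (-x) ^ 3) / γ) := by
          have := hφCodd (-x)
          rw [neg_neg] at this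
          rw [this, hφC]
          simp only [hφXpos (-x) hx']
        have hφXx : φX x = -φ (-x) := by
          have := hφXodd (-x)
          rw [neg_neg] at this
          rw [this, hφXpos (-x) hx']
        rw [hd1, hφCx, hφXx]
        linarith
      · have hd1 : deriv ψ x = DF (φ x) * -W (φ x) := (hψderivpos x h).deriv
        have hd2 := key (φ x) (hφmem x h.le)
        have hφCx : φC x = (a * φ x - g * φ x ^ 3) / γ := by
          rw [hφC]; simp only [hφXpos x h]
        rw [hd1, hφCx, hφXpos x h]
        linarith
  · have h1 : Tendsto φ (nhdsWithin 0 (Set.Ioi 0)) (nhds u0) :=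
      hφcont0.mono_left (nhdsWithin_mono 0 Set.Ioi_subset_Ici_self)
    have h2 : Real.sqrt (a / g) = u0 := by rw [hu0, ht0]
    rw [h2]
    apply h1.congr'
    filter_upwards [self_mem_nhdsWithin] with y hy
    exact (hφXpos y hy).symm
  · intro x hx y hy hxy
    simp only
    rw [hφXpos x hx, hφXpos y hy]
    have h1 := hφanti x y (le_of_lt hx) (le_of_lt hy) hxy
    have h2 : 0 ≤ φ y := le_of_lt (lt_trans hu1pos (hφmem y (le_of_lt hy)).1)
    exact pow_lt_pow_left₀ h1 h2 (by norm_num)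
  · have hφtop : Tendsto φ atTop (nhds u1) := by
      apply tendsto_order.2
      constructor
      · intro c hc
        filter_upwards [eventually_ge_atTop (0:ℝ)] with y hy
        exact lt_trans hc (hφmem y hy).1
      · intro c hc
        rcases le_or_gt c u0 with hcu | hcu
        · have hcIoc : c ∈ Set.Ioc u1 u0 := ⟨hc, hcu⟩
          have hXc0 : 0 ≤ X c := by
            rcases eq_or_lt_of_le hcu with he | hl
            · rw [he, hX0]
            · rw [← hX0]
              exact (hXanti (Set.mem_Ioi.2 hcIoc.1) (Set.mem_Ioi.2 hu10) hl).le
          filter_upwards [eventually_gt_atTop (X c)] with y hy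
          exact (hkey2 c hcIoc y (le_trans hXc0 hy.le)).2 hy
        · filter_upwards [eventually_ge_atTop (0:ℝ)] with y hy
          exact lt_of_le_of_lt (hφmem y hy).2 hcu
    have h2 : Tendsto (fun x => φ x ^ 2) atTop (nhds (u1 ^ 2)) :=
      ((continuous_pow 2).tendsto u1).comp hφtop
    have h3 : (a - γ ^ 2 / b) / g = u1 ^ 2 := by rw [hu1sq, ht1]
    rw [h3]
    apply h2.congr'
    filter_upwards [eventually_gt_atTop (0:ℝ)] with y hy
    rw [hφXpos y hy]


open Filter

/-- Band 3.1: existence of discontinuous solitons for `g < 0`, `ω < min(ωX, ωC)`,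
`ϖX·ϖC > (3/2)γ²`: antisymmetric envelopes, `φC` continuously differentiable and twice
differentiable away from `0`, satisfying the envelope equations away from `0`; `φX` jumps
at `0` with right limit `√(ϖX/g)`, `φX²` strictly decreasing on `(0,∞)` with far-field
value `(ϖX − γ²/ϖC)/g`. -/
theorem discontinuous_soliton_band_3_1
    (ω ωX ωC γ g : ℝ) (hγ : γ ≠ 0) (hg : g < 0)
    (hω : ω < min ωX ωC)
    (hband : (ω - ωX) * (ω - ωC) > (3/2) * γ ^ 2) :
    ∃ φX φC : ℝ → ℝ,
      (∀ x : ℝ, φX (-x) = -φX x) ∧ (∀ x : ℝ, φC (-x) = -φC x) ∧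
      ContDiff ℝ 1 φC ∧ φC 0 = 0 ∧
      (∀ x : ℝ, x ≠ 0 → DifferentiableAt ℝ (deriv φC) x) ∧
      (∀ x : ℝ, x ≠ 0 →
        (g * φX x ^ 2 - (ω - ωX)) * φX x + γ * φC x = 0 ∧
        -(1/2) * deriv (deriv φC) x - (ω - ωC) * φC x + γ * φX x = 0) ∧
      Tendsto φX (nhdsWithin 0 (Set.Ioi 0)) (nhds (Real.sqrt ((ω - ωX) / g))) ∧
      StrictAntiOn (fun x => φX x ^ 2) (Set.Ioi 0) ∧
      Tendsto (fun x => φX x ^ 2) atTop (nhds (((ω - ωX) - γ ^ 2 / (ω - ωC)) / g)) := by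
  have ha : ω - ωX < 0 := by
    have := lt_of_lt_of_le hω (min_le_left ωX ωC)
    linarith
  have hb : ω - ωC < 0 := by
    have := lt_of_lt_of_le hω (min_le_right ωX ωC)
    linarith
  exact soliton_aux (ω - ωX) (ω - ωC) g γ hγ hg ha hb hband
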